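/- Let V be a finite-dimensional subspace and W a closed subspace of H with β(V,W) > 0, and let w ∈ W. If u ∈ H_w and v ∈ V are such that u - v is orthogonal to both V and W^⊥, then (u,v) is the unique minimizing pair of ‖u' - v'‖ over u' ∈ H_w, v' ∈ V. -/

import Mathlib

open scoped RealInnerProductSpace

/-- Conversely, if `u ∈ H_w` and `v ∈ V` are such that `u - v` is orthogonal to both
`V` and `W^⊥`, then `(u, v)` is the unique minimizing pair of `‖u' - v'‖` over
`H_w × V` (assuming `β(V,W) > 0`). -/
theorem stmt9 {H : Type*} [NormedAddCommGroup H] [InnerProductSpace ℝ H] [CompleteSpace H]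
    (V W : Submodule ℝ H) [FiniteDimensional ℝ V] [Submodule.HasOrthogonalProjection W]
    (hβ : ∃ β > (0 : ℝ), ∀ v' ∈ V, β * ‖v'‖ ≤ ‖(W.orthogonalProjectionOnto v' : H)‖)
    (w : H) (hw : w ∈ W) (u v : H)
    (hu : (W.orthogonalProjectionOnto u : H) = w) (hv : v ∈ V)
    (horthV : ∀ x ∈ V, ⟪u - v, x⟫ = 0) (horthW : ∀ η ∈ Wᗮ, ⟪u - v, η⟫ = 0) :
    (∀ u' v' : H, (W.orthogonalProjectionOnto u' : H) = w → v' ∈ V →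
        ‖u - v‖ ≤ ‖u' - v'‖) ∧
      (∀ u' v' : H, (W.orthogonalProjectionOnto u' : H) = w → v' ∈ V →
        ‖u' - v'‖ = ‖u - v‖ → u' = u ∧ v' = v) := by
  have key : ∀ u' v' : H, (W.orthogonalProjectionOnto u' : H) = w → v' ∈ V →
      ‖u' - v'‖ ^ 2 = ‖u - v‖ ^ 2 + ‖(u' - u) + (v - v')‖ ^ 2 := by
    intro u' v' hu' hv'
    have hz : u' - u ∈ Wᗮ := by
      rw [← Submodule.orthogonalProjectionOnto_eq_zero_iff]
      have : (W.orthogonalProjectionOnto (u' - u) : H) = 0 := by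
        rw [map_sub]; push_cast; rw [hu', hu, sub_self]
      exact_mod_cast (Submodule.coe_eq_zero).mp this
    have h1 : ⟪u - v, (u' - u) + (v - v')⟫ = 0 := by
      rw [inner_add_right, horthW _ hz, horthV _ (V.sub_mem hv hv'), add_zero]
    have hdecomp : u' - v' = (u - v) + ((u' - u) + (v - v')) := by abel
    rw [hdecomp, norm_add_sq_real, h1]
    ring
  constructor
  · intro u' v' hu' hv'
    have h := key u' v' hu' hv'
    nlinarith [norm_nonneg (u - v), norm_nonneg (u' - v'),
      sq_nonneg ‖(u' - u) + (v - v')‖]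
  · intro u' v' hu' hv' heq
    have h := key u' v' hu' hv'
    rw [heq] at h
    have h0 : ‖(u' - u) + (v - v')‖ = 0 := by nlinarith [norm_nonneg ((u' - u) + (v - v'))]
    have hzero : (u' - u) + (v - v') = 0 := norm_eq_zero.mp h0
    have hzz : u' - u = v' - v := by
      rw [add_eq_zero_iff_eq_neg] at hzero
      rw [hzero]; abel
    have hzW : v' - v ∈ Wᗮ := by
      rw [← hzz, ← Submodule.orthogonalProjectionOnto_eq_zero_iff]
      have : (W.orthogonalProjectionOnto (u' - u) : H) = 0 := by
        rw [map_sub]; push_cast; rw [hu', hu, sub_self]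
      exact_mod_cast (Submodule.coe_eq_zero).mp this
    obtain ⟨β, hβ0, hβle⟩ := hβ
    have hproj : (W.orthogonalProjectionOnto (v' - v) : H) = 0 := by
      rw [Submodule.orthogonalProjectionOnto_eq_zero_iff.mpr hzW]; simp
    have hle := hβle (v' - v) (V.sub_mem hv' hv)
    rw [hproj, norm_zero] at hle
    have hn : ‖v' - v‖ = 0 := le_antisymm (by nlinarith [norm_nonneg (v' - v)]) (norm_nonneg _)
    have hv'' : v' = v := by
      have := norm_eq_zero.mp hn; rwa [sub_eq_zero] at this
    refine ⟨?_, hv''⟩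
    have : u' - u = 0 := by rw [hzz, hv'', sub_self]
    rwa [sub_eq_zero] at this
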